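/- Let G be a symmetric n×n real matrix such that G² = Δ is a diagonal matrix, Δ = diag(Δ_1,…,Δ_n). If i and j are indices with Δ_i ≠ Δ_j, then the (i,j) entry of G vanishes, g_ij = 0; moreover, for every diagonal matrix U with 1 − U·G invertible, the (i,j) entry of Γ = G·(1 − U·G)⁻¹ also vanishes. In particular, if the entries Δ_1,…,Δ_n are not all equal, then the solution Γ(u) = G·(1 − U(u)·G)⁻¹ of the basic system is reducible into blocks according to the distinct values of Δ. -/
import Mathlib


/-- Let `G` be a symmetric matrix with `G² = diagonal Δ`.  If
`Δ i ≠ Δ j` then `G i j = 0`, and moreover for every diagonal `U` with `1 - U G`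
invertible the `(i,j)` entry of `Γ = G (1 - U G)⁻¹` also vanishes; thus if the
`Δ k` are not all equal, the solution `Γ(u)` of the basic system is reducible
into blocks according to the distinct values of `Δ`. -/
theorem stmt10 {n : ℕ} (G : Matrix (Fin n) (Fin n) ℝ) (hG : G.IsSymm)
    (Δ : Fin n → ℝ) (hG2 : G * G = Matrix.diagonal Δ)
    (i j : Fin n) (hij : Δ i ≠ Δ j) :
    G i j = 0 ∧
      ∀ U : Matrix (Fin n) (Fin n) ℝ, U.IsDiag → IsUnit (1 - U * G) →
        (G * (1 - U * G)⁻¹) i j = 0 := by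
  -- G commutes with diagonal Δ since both are powers of G
  have hcomm : G * Matrix.diagonal Δ = Matrix.diagonal Δ * G := by
    rw [← hG2, ← mul_assoc, mul_assoc]
  -- hence G is block: G k l = 0 whenever Δ k ≠ Δ l
  have hBG : ∀ k l, Δ k ≠ Δ l → G k l = 0 := by
    intro k l h
    have h1 := congrFun (congrFun hcomm k) l
    rw [Matrix.mul_diagonal, Matrix.diagonal_mul] at h1
    have h2 : G k l * (Δ l - Δ k) = 0 := by ring_nf; linarith
    rcases mul_eq_zero.mp h2 with h3 | h3
    · exact h3
    · exact absurd (by linarith : Δ k = Δ l) h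
  refine ⟨hBG i j hij, ?_⟩
  intro U hU hInv
  set A : Matrix (Fin n) (Fin n) ℝ := 1 - U * G with hA
  -- A is block
  have hBA : ∀ k l, Δ k ≠ Δ l → A k l = 0 := by
    intro k l h
    have hkl : k ≠ l := fun e => h (by rw [e])
    have hUG : (U * G) k l = 0 := by
      rw [Matrix.mul_apply]
      apply Finset.sum_eq_zero
      intro m _
      by_cases hm : k = m
      · subst hm; rw [hBG k l h, mul_zero]
      · rw [hU hm, zero_mul]
    simp [hA, Matrix.sub_apply, Matrix.one_apply_ne hkl, hUG]
  have hdet : IsUnit A.det := (Matrix.isUnit_iff_isUnit_det A).mp hInv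
  have hAinv : A * A⁻¹ = 1 := Matrix.mul_nonsing_inv A hdet
  have hinvA : A⁻¹ * A = 1 := Matrix.nonsing_inv_mul A hdet
  -- block projection of A⁻¹ is a right inverse of A
  set Q' : Matrix (Fin n) (Fin n) ℝ :=
    Matrix.of (fun k l => if Δ k = Δ l then A⁻¹ k l else 0) with hQ'
  have hAQ' : A * Q' = 1 := by
    ext k l
    rw [Matrix.mul_apply]
    by_cases h : Δ k = Δ l
    · have : ∀ m ∈ Finset.univ, A k m * Q' m l = A k m * A⁻¹ m l := by
        intro m _
        by_cases hm : Δ k = Δ m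
        · have hml : Δ m = Δ l := hm.symm.trans h
          simp [hQ', Matrix.of_apply, hml]
        · rw [hBA k m hm, zero_mul, zero_mul]
      rw [Finset.sum_congr rfl this, ← Matrix.mul_apply, hAinv]
    · have hkl : k ≠ l := fun e => h (by rw [e])
      rw [Matrix.one_apply_ne hkl]
      apply Finset.sum_eq_zero
      intro m _
      by_cases hm : Δ k = Δ m
      · have : Δ m ≠ Δ l := fun e => h (hm.trans e)
        simp [hQ', Matrix.of_apply, this]
      · rw [hBA k m hm, zero_mul]
  have hQeq : Q' = A⁻¹ := by
    calc Q' = 1 * Q' := (one_mul _).symm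
    _ = (A⁻¹ * A) * Q' := by rw [hinvA]
    _ = A⁻¹ * (A * Q') := mul_assoc _ _ _
    _ = A⁻¹ := by rw [hAQ', mul_one]
  -- conclude
  rw [Matrix.mul_apply]
  apply Finset.sum_eq_zero
  intro m _
  by_cases hm : Δ i = Δ m
  · have hml : Δ m ≠ Δ j := fun e => hij (hm.trans e)
    have : A⁻¹ m j = 0 := by
      rw [← hQeq]; simp [hQ', Matrix.of_apply, hml]
    rw [this, mul_zero]
  · rw [hBG i m hm, zero_mul]
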